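/- Let A, B be nonempty closed subsets of a complete metric space (X,d) such that B is approximatively compact with respect to A, A₀ ≠ ∅, T(A₀) ⊆ B₀, (A,B) has the p-property, and T : A → B is a generalized F-proximal contraction of the first kind. Then there exists x ∈ A with d(x, T x) = d(A,B). -/

import Mathlib

open Filter Topology

noncomputable def setDist {X : Type*} [MetricSpace X] (A B : Set X) : ℝ :=
  sInf (Set.image2 dist A B)

def pProperty {X : Type*} [MetricSpace X] (A B : Set X) : Prop :=
  ∀ u₁ ∈ A, ∀ u₂ ∈ A, ∀ v₁ ∈ B, ∀ v₂ ∈ B,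
    dist u₁ v₁ = setDist A B → dist u₂ v₂ = setDist A B → dist u₁ u₂ = dist v₁ v₂

def A0 {X : Type*} [MetricSpace X] (A B : Set X) : Set X :=
  {x ∈ A | ∃ y ∈ B, dist x y = setDist A B}

def B0 {X : Type*} [MetricSpace X] (A B : Set X) : Set X :=
  {y ∈ B | ∃ x ∈ A, dist x y = setDist A B}

def approxCompact {X : Type*} [MetricSpace X] (A B : Set X) : Prop :=
  ∀ x ∈ A, ∀ y : ℕ → X, (∀ n, y n ∈ B) →
    Tendsto (fun n => dist x (y n)) atTop (nhds (Metric.infDist x B)) →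
    ∃ z ∈ B, ∃ φ : ℕ → ℕ, StrictMono φ ∧ Tendsto (y ∘ φ) atTop (nhds z)

def OmegaF (F : ℝ → ℝ) : Prop :=
  (∀ x y : ℝ, 0 < x → x < y → F x < F y) ∧
  (∀ α : ℕ → ℝ, (∀ n, 0 < α n) →
    (Tendsto α atTop (nhds 0) ↔ Tendsto (fun n => F (α n)) atTop atBot)) ∧
  (∃ k ∈ Set.Ioo (0:ℝ) 1,
    Tendsto (fun t => t ^ k * F t) (nhdsWithin 0 (Set.Ioi 0)) (nhds 0))

def HRContraction {X : Type*} [MetricSpace X] (T : X → X) (F : ℝ → ℝ)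
    (a b c e τ L : ℝ) : Prop :=
  ∀ x y : X, 0 < dist (T x) (T y) →
    τ + F (dist (T x) (T y)) ≤
      F (a * dist x y + b * dist x (T x) + c * dist y (T y) +
         e * dist x (T y) + L * dist y (T x))

def GFProximal {X : Type*} [MetricSpace X] (A B : Set X) (T : X → X) (F : ℝ → ℝ)
    (a b c h τ : ℝ) : Prop :=
  ∀ u₁ ∈ A, ∀ u₂ ∈ A, ∀ x₁ ∈ A, ∀ x₂ ∈ A,
    dist u₁ (T x₁) = setDist A B → dist u₂ (T x₂) = setDist A B → u₁ ≠ u₂ →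
      τ + F (dist u₁ u₂) ≤
        F (a * dist x₁ x₂ + b * dist u₁ x₁ + c * dist u₂ x₂ +
           h * (dist u₂ x₁ + dist u₁ x₂))

theorem stmt6 {X : Type*} [MetricSpace X] [CompleteSpace X] (A B : Set X)
    (hA : A.Nonempty) (hB : B.Nonempty) (hAc : IsClosed A) (hBc : IsClosed B)
    (hac : approxCompact A B) (hA0 : (A0 A B).Nonempty) (hp : pProperty A B)
    (T : X → X) (hT : ∀ x ∈ A, T x ∈ B) (hTA0 : ∀ x ∈ A0 A B, T x ∈ B0 A B)
    (F : ℝ → ℝ) (hF : OmegaF F) (a b c h τ : ℝ)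
    (ha : 0 < a) (hb : 0 < b) (hc : 0 < c) (hh : 0 < h) (hτ : 0 < τ)
    (hsum : a + b + c + 2 * h = 1) (hc1 : c ≠ 1)
    (hprox : GFProximal A B T F a b c h τ) :
    ∃ x ∈ A, dist x (T x) = setDist A B := by
  classical
  obtain ⟨hFmono', hFiff, k, hk, hklim⟩ := hF
  have hk0 : (0:ℝ) < k := hk.1
  have hk1 : k < 1 := hk.2
  have hbdd : BddBelow (Set.image2 dist A B) := by
    refine ⟨0, ?_⟩
    rintro z ⟨p, hp', q, hq', rfl⟩
    exact dist_nonneg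
  have hsd_le : ∀ p ∈ A, ∀ q ∈ B, setDist A B ≤ dist p q := fun p hp' q hq' =>
    csInf_le hbdd (Set.mem_image2_of_mem hp' hq')
  have hFmono : ∀ {s t : ℝ}, 0 < s → s ≤ t → F s ≤ F t := by
    intro s t hs hst
    rcases eq_or_lt_of_le hst with rfl | hlt
    · exact le_rfl
    · exact (hFmono' s t hs hlt).le
  -- construct the iterative sequence
  have hstep : ∀ p ∈ A0 A B, ∃ q, q ∈ A0 A B ∧ dist q (T p) = setDist A B := by
    intro p hp'
    obtain ⟨hTpB, u, huA, hud⟩ := hTA0 p hp'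
    exact ⟨u, ⟨huA, T p, hTpB, hud⟩, hud⟩
  obtain ⟨x₀, hx₀⟩ := hA0
  let g : X → X := fun p => if hp' : p ∈ A0 A B then (hstep p hp').choose else p
  let x : ℕ → X := fun n => g^[n] x₀
  have hmem : ∀ n, x n ∈ A0 A B := by
    intro n
    induction n with
    | zero => exact hx₀
    | succ n ih =>
      have hxs : x (n + 1) = g (x n) := Function.iterate_succ_apply' g n x₀
      rw [hxs]
      show (if hp' : x n ∈ A0 A B then (hstep (x n) hp').choose else x n) ∈ A0 A B
      rw [dif_pos ih]
      exact (hstep _ ih).choose_spec.1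
  have hdist : ∀ n, dist (x (n + 1)) (T (x n)) = setDist A B := by
    intro n
    have hxs : x (n + 1) = g (x n) := Function.iterate_succ_apply' g n x₀
    rw [hxs]
    show dist (if hp' : x n ∈ A0 A B then (hstep (x n) hp').choose else x n) (T (x n)) = _
    rw [dif_pos (hmem n)]
    exact (hstep _ (hmem n)).choose_spec.2
  have hxA : ∀ n, x n ∈ A := fun n => (hmem n).1
  by_cases hfix : ∃ n, x (n + 1) = x n
  · obtain ⟨n, hn⟩ := hfix
    exact ⟨x n, hxA n, hn ▸ hdist n⟩
  push_neg at hfix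
  set d : ℕ → ℝ := fun n => dist (x n) (x (n + 1)) with hd
  have hdpos : ∀ n, 0 < d n := fun n => dist_pos.2 fun e => hfix n e.symm
  -- step inequality
  have hstep2 : ∀ n, τ + F (d (n + 1)) ≤ F ((a + b + h) * d n + (c + h) * d (n + 1)) := by
    intro n
    have hne : x (n + 1) ≠ x (n + 2) := fun e => hfix (n + 1) e.symm
    have hpn := hprox (x (n + 1)) (hxA _) (x (n + 2)) (hxA _) (x n) (hxA _) (x (n + 1)) (hxA _)
      (hdist n) (hdist (n + 1)) hne
    have e1 : dist (x (n + 1)) (x n) = d n := dist_comm _ _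
    have e2 : dist (x (n + 2)) (x (n + 1)) = d (n + 1) := dist_comm _ _
    have e3 : dist (x (n + 1)) (x (n + 2)) = d (n + 1) := rfl
    have e4 : dist (x n) (x (n + 1)) = d n := rfl
    have htr : dist (x (n + 2)) (x n) ≤ d (n + 1) + d n := by
      calc dist (x (n + 2)) (x n) ≤ dist (x (n + 2)) (x (n + 1)) + dist (x (n + 1)) (x n) :=
            dist_triangle _ _ _
        _ = d (n + 1) + d n := by rw [e1, e2]
    have hargpos : 0 < a * dist (x n) (x (n + 1)) + b * dist (x (n + 1)) (x n) +
        c * dist (x (n + 2)) (x (n + 1)) +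
        h * (dist (x (n + 2)) (x n) + dist (x (n + 1)) (x (n + 1))) := by
      have h1 := hdpos n
      have h2 := hdpos (n + 1)
      have h3 : (0:ℝ) ≤ dist (x (n + 2)) (x n) := dist_nonneg
      have h4 : (0:ℝ) ≤ dist (x (n + 1)) (x (n + 1)) := dist_nonneg
      rw [e1, e2, e4]
      nlinarith [mul_pos ha h1, mul_pos hb h1, mul_pos hc h2, mul_nonneg hh.le (add_nonneg h3 h4)]
    have hargle : a * dist (x n) (x (n + 1)) + b * dist (x (n + 1)) (x n) +
        c * dist (x (n + 2)) (x (n + 1)) +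
        h * (dist (x (n + 2)) (x n) + dist (x (n + 1)) (x (n + 1))) ≤
        (a + b + h) * d n + (c + h) * d (n + 1) := by
      rw [e1, e2, e4, dist_self]
      nlinarith [htr]
    calc τ + F (d (n + 1)) = τ + F (dist (x (n + 1)) (x (n + 2))) := by rw [e3]
      _ ≤ _ := hpn
      _ ≤ F ((a + b + h) * d n + (c + h) * d (n + 1)) := hFmono hargpos hargle
  have hdec : ∀ n, d (n + 1) ≤ d n := by
    intro n
    by_contra hcon
    push_neg at hcon
    have harg2 : (a + b + h) * d n + (c + h) * d (n + 1) < d (n + 1) := by nlinarith [hdpos n]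
    have hargp : 0 < (a + b + h) * d n + (c + h) * d (n + 1) := by
      nlinarith [hdpos n, hdpos (n + 1)]
    have := hFmono' _ _ hargp harg2
    have h2 := hstep2 n
    linarith
  have hFstep : ∀ n, F (d (n + 1)) ≤ F (d n) - τ := by
    intro n
    have hargp : 0 < (a + b + h) * d n + (c + h) * d (n + 1) := by
      nlinarith [hdpos n, hdpos (n + 1)]
    have harg2 : (a + b + h) * d n + (c + h) * d (n + 1) ≤ d n := by
      nlinarith [hdec n, hdpos n]
    have := hFmono hargp harg2
    have h2 := hstep2 n
    linarith
  have hFn : ∀ n, F (d n) ≤ F (d 0) - n * τ := by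
    intro n
    induction n with
    | zero => simp
    | succ n ih =>
      have := hFstep n
      push_cast
      linarith
  have hFatBot : Tendsto (fun n => F (d n)) atTop atBot := by
    have h1 : Tendsto (fun n : ℕ => (n : ℝ) * τ) atTop atTop :=
      (tendsto_natCast_atTop_atTop (R := ℝ)).atTop_mul_const hτ
    have h2 : Tendsto (fun n : ℕ => -((n : ℝ) * τ)) atTop atBot := tendsto_neg_atBot_iff.2 h1
    have h3 : Tendsto (fun n : ℕ => F (d 0) + -((n : ℝ) * τ)) atTop atBot :=
      tendsto_atBot_add_const_left _ _ h2
    refine tendsto_atBot_mono (fun n => ?_) h3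
    have := hFn n
    linarith
  have hd0 : Tendsto d atTop (nhds 0) := (hFiff d hdpos).2 hFatBot
  have hd0' : Tendsto d atTop (nhdsWithin 0 (Set.Ioi 0)) :=
    tendsto_nhdsWithin_iff.2 ⟨hd0, Eventually.of_forall fun n => hdpos n⟩
  have htk : Tendsto (fun n => d n ^ k * F (d n)) atTop (nhds 0) := hklim.comp hd0'
  have hdk0 : Tendsto (fun n => d n ^ k) atTop (nhds 0) := by
    have := hd0.rpow_const (p := k) (Or.inr hk0.le)
    rwa [Real.zero_rpow hk0.ne'] at this
  have hcomb : Tendsto (fun n => d n ^ k * (F (d 0) - F (d n))) atTop (nhds 0) := by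
    have := (hdk0.mul_const (F (d 0))).sub htk
    simp only [zero_mul, sub_zero] at this
    convert this using 2 with n
    ring
  have hnk : Tendsto (fun n : ℕ => (n : ℝ) * τ * d n ^ k) atTop (nhds 0) := by
    refine squeeze_zero (fun n => ?_) (fun n => ?_) hcomb
    · positivity
    · have h1 : (n : ℝ) * τ ≤ F (d 0) - F (d n) := by have := hFn n; linarith
      have h2 : (0:ℝ) ≤ d n ^ k := Real.rpow_nonneg (hdpos n).le k
      calc (n : ℝ) * τ * d n ^ k ≤ (F (d 0) - F (d n)) * d n ^ k :=
            mul_le_mul_of_nonneg_right h1 h2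
        _ = d n ^ k * (F (d 0) - F (d n)) := mul_comm _ _
  have hnk' : Tendsto (fun n : ℕ => (n : ℝ) * d n ^ k) atTop (nhds 0) := by
    have := hnk.const_mul τ⁻¹
    simp only [mul_zero] at this
    convert this using 2 with n
    field_simp
  have hev : ∀ᶠ n : ℕ in atTop, (n : ℝ) * d n ^ k ≤ 1 :=
    hnk'.eventually_le_const one_pos
  obtain ⟨N, hN⟩ := hev.exists_forall_of_atTop
  set M := max N 1 with hM
  have hbound : ∀ n, M ≤ n → d n ≤ (n : ℝ) ^ (-k⁻¹) := by
    intro n hn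
    have hn1 : 1 ≤ n := le_trans (le_max_right N 1) hn
    have hnpos : (0:ℝ) < n := by exact_mod_cast hn1
    have hkey := hN n (le_trans (le_max_left N 1) hn)
    have hdk : d n ^ k ≤ (n : ℝ)⁻¹ := by
      rw [← one_div]
      refine (le_div_iff₀ hnpos).2 ?_
      rw [mul_comm]
      exact hkey
    have hrw : d n = (d n ^ k) ^ k⁻¹ := by
      rw [← Real.rpow_mul (hdpos n).le, mul_inv_cancel₀ hk0.ne', Real.rpow_one]
    calc d n = (d n ^ k) ^ k⁻¹ := hrw
      _ ≤ ((n : ℝ)⁻¹) ^ k⁻¹ :=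
          Real.rpow_le_rpow (Real.rpow_nonneg (hdpos n).le k) hdk (inv_nonneg.2 hk0.le)
      _ = (n : ℝ) ^ (-k⁻¹) := by
          rw [Real.inv_rpow hnpos.le, ← Real.rpow_neg hnpos.le]
  have hsum_rpow : Summable (fun n : ℕ => (n : ℝ) ^ (-k⁻¹)) := by
    refine Real.summable_nat_rpow.2 ?_
    have h1 : (1:ℝ) < k⁻¹ := one_lt_inv_iff₀.2 ⟨hk0, hk1⟩
    linarith
  have hsumd : Summable d := by
    rw [← summable_nat_add_iff M]
    refine Summable.of_nonneg_of_le (fun n => (hdpos _).le) (fun n => ?_)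
      ((summable_nat_add_iff M).2 hsum_rpow)
    exact_mod_cast hbound (n + M) (Nat.le_add_left M n)
  have hcauchy : CauchySeq x := cauchySeq_of_dist_le_of_summable d (fun n => le_rfl) hsumd
  obtain ⟨ξ, hξ⟩ := cauchySeq_tendsto_of_complete hcauchy
  have hξA : ξ ∈ A := hAc.mem_of_tendsto hξ (Eventually.of_forall hxA)
  have hxn1 : Tendsto (fun n => x (n + 1)) atTop (nhds ξ) := hξ.comp (tendsto_add_atTop_nat 1)
  have hdxn1 : Tendsto (fun n => dist ξ (x (n + 1))) atTop (nhds 0) := by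
    have := (tendsto_const_nhds : Tendsto (fun _ : ℕ => ξ) atTop (nhds ξ)).dist hxn1
    simpa using this
  have hdistξ : Tendsto (fun n => dist ξ (T (x n))) atTop (nhds (setDist A B)) := by
    refine tendsto_of_tendsto_of_tendsto_of_le_of_le
      (g := fun _ : ℕ => setDist A B) (h := fun n => dist ξ (x (n + 1)) + setDist A B)
      tendsto_const_nhds ?_ (fun n => hsd_le ξ hξA _ (hT _ (hxA n))) (fun n => ?_)
    · have := hdxn1.add_const (setDist A B)
      simpa using this
    · calc dist ξ (T (x n)) ≤ dist ξ (x (n + 1)) + dist (x (n + 1)) (T (x n)) :=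
            dist_triangle _ _ _
        _ = dist ξ (x (n + 1)) + setDist A B := by rw [hdist n]
  have hinf : Metric.infDist ξ B = setDist A B := by
    refine le_antisymm ?_ ?_
    · exact ge_of_tendsto hdistξ (Eventually.of_forall fun n =>
        Metric.infDist_le_dist_of_mem (hT _ (hxA n)))
    · rw [Metric.infDist_eq_iInf]
      have : Nonempty B := hB.to_subtype
      exact le_ciInf fun y => hsd_le ξ hξA y y.2
  obtain ⟨z, hzB, φ, hφ, hφt⟩ := hac ξ hξA (fun n => T (x n)) (fun n => hT _ (hxA n))
    (by rw [hinf]; exact hdistξ)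
  have hξz : dist ξ z = setDist A B := by
    have h1 : Tendsto (fun n => dist ξ (T (x (φ n)))) atTop (nhds (dist ξ z)) := by
      have := (tendsto_const_nhds : Tendsto (fun _ : ℕ => ξ) atTop (nhds ξ)).dist hφt
      simpa [Function.comp] using this
    have h2 : Tendsto (fun n => dist ξ (T (x (φ n)))) atTop (nhds (setDist A B)) :=
      hdistξ.comp hφ.tendsto_atTop
    exact tendsto_nhds_unique h1 h2
  have hξA0 : ξ ∈ A0 A B := ⟨hξA, z, hzB, hξz⟩
  obtain ⟨hTξB, u, huA, hu⟩ := hTA0 ξ hξA0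
  by_cases huξ : u = ξ
  · exact ⟨ξ, hξA, huξ ▸ hu⟩
  · exfalso
    set D := dist u ξ with hD
    have hDpos : 0 < D := dist_pos.2 huξ
    have hch : c + h < 1 := by linarith
    set m := ((c + h) * D + D) / 2 with hm
    have hm1 : (c + h) * D < m := by rw [hm]; nlinarith
    have hm2 : m < D := by rw [hm]; nlinarith
    have hm0 : 0 < m := by
      rw [hm]
      have : 0 < (c + h) * D := by positivity
      linarith
    have h1 : Tendsto (fun n => dist (x n) ξ) atTop (nhds 0) := by
      have := hξ.dist (tendsto_const_nhds : Tendsto (fun _ : ℕ => ξ) atTop (nhds ξ))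
      simpa using this
    have h2 : Tendsto (fun n => dist (x (n + 1)) (x n)) atTop (nhds 0) := by
      have := hxn1.dist hξ
      simpa using this
    have h3 : Tendsto (fun n => dist u (x n)) atTop (nhds D) := by
      exact (tendsto_const_nhds : Tendsto (fun _ : ℕ => u) atTop (nhds u)).dist hξ
    have h4 : Tendsto (fun n => dist (x (n + 1)) ξ) atTop (nhds 0) := by
      have := hxn1.dist (tendsto_const_nhds : Tendsto (fun _ : ℕ => ξ) atTop (nhds ξ))
      simpa using this
    have hargt : Tendsto (fun n => a * dist (x n) ξ + b * dist (x (n + 1)) (x n) +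
        c * dist u ξ + h * (dist u (x n) + dist (x (n + 1)) ξ)) atTop
        (nhds ((c + h) * D)) := by
      have := (((h1.const_mul a).add (h2.const_mul b)).add
        (tendsto_const_nhds (x := c * dist u ξ))).add ((h3.add h4).const_mul h)
      have heq : a * 0 + b * 0 + c * dist u ξ + h * (D + 0) = (c + h) * D := by
        rw [← hD]; ring
      rwa [heq] at this
    have he1 : ∀ᶠ n : ℕ in atTop, a * dist (x n) ξ + b * dist (x (n + 1)) (x n) +
        c * dist u ξ + h * (dist u (x n) + dist (x (n + 1)) ξ) < m :=
      hargt.eventually_lt_const hm1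
    have he2 : ∀ᶠ n : ℕ in atTop, m < dist (x (n + 1)) u := by
      have h5 : Tendsto (fun n => dist (x (n + 1)) u) atTop (nhds D) := by
        have := hxn1.dist (tendsto_const_nhds : Tendsto (fun _ : ℕ => u) atTop (nhds u))
        rw [hD, dist_comm]
        exact this
      exact h5.eventually_const_lt hm2
    obtain ⟨n, hn1, hn2⟩ := (he1.and he2).exists
    have hne : x (n + 1) ≠ u := by
      intro e
      rw [e, dist_self] at hn2
      linarith
    have hargpos : 0 < a * dist (x n) ξ + b * dist (x (n + 1)) (x n) +
        c * dist u ξ + h * (dist u (x n) + dist (x (n + 1)) ξ) := by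
      have := mul_pos hc hDpos
      nlinarith [mul_nonneg ha.le (dist_nonneg (x := x n) (y := ξ)),
        mul_nonneg hb.le (dist_nonneg (x := x (n + 1)) (y := x n)),
        mul_nonneg hh.le (add_nonneg (dist_nonneg (x := u) (y := x n))
          (dist_nonneg (x := x (n + 1)) (y := ξ)))]
    have hkey := hprox (x (n + 1)) (hxA (n + 1)) u huA (x n) (hxA n) ξ hξA (hdist n) hu hne
    have hF1 : F (a * dist (x n) ξ + b * dist (x (n + 1)) (x n) +
        c * dist u ξ + h * (dist u (x n) + dist (x (n + 1)) ξ)) <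
        F (dist (x (n + 1)) u) :=
      hFmono' _ _ hargpos (lt_trans hn1 hn2)
    linarith
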